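/- Let G=(V,E,w) be an edge-weighted graph with E≠∅ and let d be a positive real with d ≥ w_max. If the density of the whole graph satisfies d(V) ≥ d, then there exists a subset S ⊆ V such that the induced subgraph G[S] is (⌊⌊d/w_max⌋/2⌋ + 1)-vertex-connected and every vertex of G[S] has weighted degree strictly greater than w_min·⌊d/w_max⌋ in G[S]. -/
import Mathlib


open Finset
open scoped Classical

noncomputable section

variable {V : Type*} [Fintype V] [DecidableEq V]

/-- The set of edges of `G` with both endpoints in `S`, i.e. the edge set `E(S)`
of the induced subgraph `G[S]`. -/
def edgesIn (G : SimpleGraph V) (S : Finset V) : Finset (Sym2 V) :=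
  Finset.univ.filter (fun e => e ∈ G.edgeSet ∧ ∀ v ∈ e, v ∈ S)

/-- `w(S)`: the total weight of the edges of the induced subgraph `G[S]`. -/
def wsum (G : SimpleGraph V) (w : Sym2 V → ℝ) (S : Finset V) : ℝ :=
  ∑ e ∈ edgesIn G S, w e

/-- The density `d(S) = w(S)/|S|` of the induced subgraph `G[S]`. -/
def density (G : SimpleGraph V) (w : Sym2 V → ℝ) (S : Finset V) : ℝ :=
  wsum G w S / S.card

/-- The weighted degree of a vertex `v` in the induced subgraph `G[S]`. -/
def wdeg (G : SimpleGraph V) (w : Sym2 V → ℝ) (S : Finset V) (v : V) : ℝ :=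
  ∑ e ∈ (edgesIn G S).filter (fun e => v ∈ e), w e

/-- `G[S]` is `k`-vertex-connected: it has at least `k+1` vertices, and deleting any set
of fewer than `k` vertices leaves a connected graph. -/
def VertexConnected (G : SimpleGraph V) (S : Finset V) (k : ℕ) : Prop :=
  k + 1 ≤ S.card ∧ ∀ D : Finset V, D ⊆ S → D.card < k →
    (G.induce ((S \ D : Finset V) : Set V)).Connected

/-- The edge-weighted graph `G[S]` is `k`-edge-connected: it is connected, and every set `F`
of its edges whose removal disconnects it has total weight at least `k`. -/
def EdgeConnected (G : SimpleGraph V) (w : Sym2 V → ℝ) (S : Finset V) (k : ℝ) : Prop :=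
  (G.induce (S : Set V)).Connected ∧
  ∀ F : Finset (Sym2 V), F ⊆ edgesIn G S →
    ¬ ((G.deleteEdges (F : Set (Sym2 V))).induce (S : Set V)).Connected →
    k ≤ ∑ e ∈ F, w e


lemma mem_edgesIn {G : SimpleGraph V} {S : Finset V} {e : Sym2 V} :
    e ∈ edgesIn G S ↔ e ∈ G.edgeSet ∧ ∀ v ∈ e, v ∈ S := by
  simp [edgesIn]

lemma edgesIn_mono {G : SimpleGraph V} {S T : Finset V} (h : S ⊆ T) :
    edgesIn G S ⊆ edgesIn G T := by
  intro e he
  rw [mem_edgesIn] at he ⊢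
  exact ⟨he.1, fun v hv => h (he.2 v hv)⟩

lemma edgesIn_erase {G : SimpleGraph V} {S : Finset V} {v : V} :
    edgesIn G (S.erase v) = (edgesIn G S).filter (fun e => v ∉ e) := by
  ext e
  simp only [mem_edgesIn, Finset.mem_filter, Finset.mem_erase]
  constructor
  · rintro ⟨he, h2⟩
    exact ⟨⟨he, fun u hu => (h2 u hu).2⟩, fun hv => (h2 v hv).1 rfl⟩
  · rintro ⟨⟨he, h2⟩, hv⟩
    exact ⟨he, fun u hu => ⟨fun h => hv (h ▸ hu), h2 u hu⟩⟩

lemma wsum_erase (G : SimpleGraph V) (w : Sym2 V → ℝ) (S : Finset V) (v : V) :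
    wsum G w S = wsum G w (S.erase v) + wdeg G w S v := by
  rw [wsum, wdeg, wsum, edgesIn_erase,
    ← Finset.sum_filter_add_sum_filter_not (edgesIn G S) (fun e => v ∈ e) w]
  ring

lemma filter_mem_eq_image {G : SimpleGraph V} {S : Finset V} {v : V} (hv : v ∈ S) :
    (edgesIn G S).filter (fun e => v ∈ e)
      = ((S.erase v).filter (fun u => G.Adj v u)).image (fun u => s(v, u)) := by
  ext e
  simp only [Finset.mem_filter, Finset.mem_image, Finset.mem_erase, mem_edgesIn]
  constructor
  · rintro ⟨⟨he, hins⟩, hve⟩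
    induction e using Sym2.ind with
    | _ a b =>
      rw [SimpleGraph.mem_edgeSet] at he
      rw [Sym2.mem_iff] at hve
      rcases hve with rfl | rfl
      · exact ⟨b, ⟨⟨fun hb => G.irrefl (hb ▸ he), hins b (by simp)⟩, he⟩, rfl⟩
      · exact ⟨a, ⟨⟨fun ha => G.irrefl (ha ▸ he.symm), hins a (by simp)⟩, he.symm⟩,
          Sym2.eq_swap⟩
  · rintro ⟨u, ⟨⟨hne, hu⟩, hadj⟩, rfl⟩
    refine ⟨⟨(G.mem_edgeSet).2 hadj, ?_⟩, by simp⟩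
    intro x hx
    rcases Sym2.mem_iff.1 hx with rfl | rfl
    exacts [hv, hu]

lemma wdeg_eq (G : SimpleGraph V) (w : Sym2 V → ℝ) {S : Finset V} {v : V} (hv : v ∈ S) :
    wdeg G w S v = ∑ u ∈ (S.erase v).filter (fun u => G.Adj v u), w s(v, u) := by
  rw [wdeg, filter_mem_eq_image hv, Finset.sum_image]
  intro a ha b hb hab
  exact (Sym2.congr_right).1 hab

lemma wdeg_nonneg (G : SimpleGraph V) {w : Sym2 V → ℝ} (hpos : ∀ e ∈ G.edgeSet, 0 ≤ w e)
    (S : Finset V) (v : V) : 0 ≤ wdeg G w S v := by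
  apply Finset.sum_nonneg
  intro e he
  exact hpos e (mem_edgesIn.1 (Finset.mem_filter.1 he).1).1

lemma wdeg_le (G : SimpleGraph V) {w : Sym2 V → ℝ} {M : ℝ} (hM : 0 ≤ M)
    (hb : ∀ e ∈ G.edgeSet, w e ≤ M) {S : Finset V} {v : V} (hv : v ∈ S) :
    wdeg G w S v ≤ M * ((S.card : ℝ) - 1) := by
  rw [wdeg_eq G w hv]
  calc ∑ u ∈ (S.erase v).filter (fun u => G.Adj v u), w s(v, u)
      ≤ ∑ u ∈ (S.erase v).filter (fun u => G.Adj v u), M := by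
        apply Finset.sum_le_sum
        intro u hu
        exact hb _ ((G.mem_edgeSet).2 (Finset.mem_filter.1 hu).2)
    _ = ((S.erase v).filter (fun u => G.Adj v u)).card * M := by
        rw [Finset.sum_const, nsmul_eq_mul]
    _ ≤ (S.erase v).card * M := by
        have := Finset.card_filter_le (S.erase v) (fun u => G.Adj v u)
        exact mul_le_mul_of_nonneg_right (by exact_mod_cast this) hM
    _ = M * ((S.card : ℝ) - 1) := by
        rw [Finset.card_erase_of_mem hv]
        have h1 : 1 ≤ S.card := Finset.card_pos.2 ⟨v, hv⟩
        push_cast [h1]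
        ring

lemma wsum_nonneg (G : SimpleGraph V) {w : Sym2 V → ℝ} (hpos : ∀ e ∈ G.edgeSet, 0 ≤ w e)
    (S : Finset V) : 0 ≤ wsum G w S :=
  Finset.sum_nonneg fun e he => hpos e (mem_edgesIn.1 he).1

lemma wsum_le (G : SimpleGraph V) {w : Sym2 V → ℝ} {M : ℝ} (hM : 0 ≤ M)
    (hb : ∀ e ∈ G.edgeSet, w e ≤ M) (hpos : ∀ e ∈ G.edgeSet, 0 ≤ w e) :
    ∀ n (S : Finset V), S.card = n →
      2 * wsum G w S ≤ M * ((S.card : ℝ) * ((S.card : ℝ) - 1)) := by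
  intro n
  induction n with
  | zero =>
      intro S hS
      rw [Finset.card_eq_zero.1 hS]
      have : edgesIn G (∅ : Finset V) = ∅ := by
        ext e
        simp only [mem_edgesIn, Finset.notMem_empty, iff_false, not_and]
        intro he
        induction e using Sym2.ind with
        | _ a b => exact fun h => (h a (by simp)).elim
      simp [wsum, this]
  | succ m ih =>
      intro S hS
      have hne : S.Nonempty := Finset.card_pos.1 (by omega)
      obtain ⟨v, hv⟩ := hne
      have hcard : (S.erase v).card = m := by
        rw [Finset.card_erase_of_mem hv, hS]
        omega
      have h1 := ih (S.erase v) hcard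
      have h2 := wdeg_le G hM hb hv
      have h3 := wsum_erase G w S v
      have hc : ((S.erase v).card : ℝ) = (S.card : ℝ) - 1 := by
        rw [Finset.card_erase_of_mem hv]
        have : 1 ≤ S.card := Finset.card_pos.2 ⟨v, hv⟩
        push_cast [this]
        ring
      rw [hc] at h1
      nlinarith [hM, Finset.card_pos.2 ⟨v, hv⟩]

/-- The straightforward application of Mader's theorem to edge-weighted graphs:
if `d ≥ wmax` and the density of `G` is at least `d`, then `G` has an induced subgraph
`G[S]` that is `(⌊⌊d/wmax⌋/2⌋+1)`-vertex-connected and in which every vertex has weighted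
degree greater than `wmin·⌊d/wmax⌋`. -/
theorem mader_weighted_weak (G : SimpleGraph V) (w : Sym2 V → ℝ)
    (hE : (edgesIn G Finset.univ).Nonempty)
    (hw : ∀ e ∈ G.edgeSet, 0 < w e)
    (d : ℝ) (hd : 0 < d)
    (hdw : (edgesIn G Finset.univ).sup' hE w ≤ d)
    (hdens : density G w Finset.univ ≥ d) :
    ∃ S : Finset V,
      VertexConnected G S (⌊d / (edgesIn G Finset.univ).sup' hE w⌋₊ / 2 + 1) ∧
      ∀ v ∈ S,
        (edgesIn G Finset.univ).inf' hE w *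
          ((⌊d / (edgesIn G Finset.univ).sup' hE w⌋₊ : ℕ) : ℝ) < wdeg G w S v := by
  classical
  set wmax := (edgesIn G Finset.univ).sup' hE w with hwmaxdef
  set wmin := (edgesIn G Finset.univ).inf' hE w with hwmindef
  set k : ℕ := ⌊d / wmax⌋₊ with hkdef
  obtain ⟨e₀, he₀⟩ := hE
  have he₀E : e₀ ∈ G.edgeSet := (mem_edgesIn.1 he₀).1
  have hwmaxpos : 0 < wmax := lt_of_lt_of_le (hw e₀ he₀E) (Finset.le_sup' w he₀)
  have hminmax : wmin ≤ wmax := le_trans (Finset.inf'_le w he₀) (Finset.le_sup' w he₀)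
  have hbmax : ∀ e ∈ G.edgeSet, w e ≤ wmax := by
    intro e he
    apply Finset.le_sup'
    rw [mem_edgesIn]
    exact ⟨he, fun v _ => Finset.mem_univ v⟩
  have hpos0 : ∀ e ∈ G.edgeSet, (0:ℝ) ≤ w e := fun e he => (hw e he).le
  have hkd : wmax * (k:ℝ) ≤ d := by
    have h1 : (k:ℝ) ≤ d / wmax := Nat.floor_le (le_of_lt (div_pos hd hwmaxpos))
    calc wmax * (k:ℝ) ≤ wmax * (d / wmax) := mul_le_mul_of_nonneg_left h1 hwmaxpos.le
      _ = d := by field_simp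
  set c : ℝ := ((k / 2 : ℕ) : ℝ) + 1/2 with hcdef
  have hcle : c ≤ (k:ℝ)/2 + 1/2 := by
    have h : ((k/2 : ℕ):ℝ) ≤ (k:ℝ)/2 := by
      rw [le_div_iff₀ (by norm_num : (0:ℝ) < 2)]
      exact_mod_cast Nat.div_mul_le_self k 2
    linarith
  have hcpos : 0 < c := by positivity
  clear_value wmax wmin k c
  set good : Finset V → Prop :=
    fun A => k + 1 ≤ A.card ∧ d * ((A.card : ℝ) - c) < wsum G w A with hgooddef
  have hgood_card : ∀ A : Finset V, good A → k + 2 ≤ A.card := by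
    intro A hA
    by_contra hlt
    have hc1 : A.card = k + 1 := by omega
    obtain ⟨-, h2⟩ := hA
    have hs := wsum_le G hwmaxpos.le hbmax hpos0 A.card A rfl
    rw [hc1] at hs h2
    push_cast at hs h2
    have hx : (0:ℝ) ≤ (k:ℝ) := Nat.cast_nonneg k
    have e1 : ((k:ℝ) + 1) / 2 ≤ (k:ℝ) + 1 - c := by linarith
    have e2 : d * (((k:ℝ)+1)/2) ≤ d * ((k:ℝ)+1-c) := mul_le_mul_of_nonneg_left e1 hd.le
    have e3 : wmax * (k:ℝ) * ((k:ℝ)+1) ≤ d * ((k:ℝ)+1) := mul_le_mul_of_nonneg_right hkd (by linarith)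
    have e4 : wmax * (((k:ℝ)+1) * ((k:ℝ)+1-1)) = wmax * (k:ℝ) * ((k:ℝ)+1) := by ring
    have e5 : d * (((k:ℝ)+1)/2) * 2 = d * ((k:ℝ)+1) := by ring
    linarith
  -- univ is good
  have hnV : 0 < (Finset.univ : Finset V).card := by
    by_contra h
    have hempty : (Finset.univ : Finset V) = ∅ := by
      simpa using Finset.card_eq_zero.1 (by omega)
    have := (mem_edgesIn.1 he₀).2
    induction e₀ using Sym2.ind with
    | _ a b => exact absurd (this a (by simp)) (by simp [hempty])
  have hnpos : (0:ℝ) < ((Finset.univ : Finset V).card : ℝ) := by exact_mod_cast hnV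
  have hwU : d * ((Finset.univ : Finset V).card : ℝ) ≤ wsum G w Finset.univ := by
    rw [density, ge_iff_le, le_div_iff₀ hnpos] at hdens
    exact hdens
  have hsU := wsum_le G hwmaxpos.le hbmax hpos0 (Finset.univ : Finset V).card Finset.univ rfl
  have hnk : (k:ℝ) + 1 ≤ ((Finset.univ : Finset V).card : ℝ) := by
    nlinarith [hwU, hsU, mul_le_mul_of_nonneg_right hkd hnpos.le,
      mul_pos hwmaxpos hnpos,
      mul_nonneg (mul_nonneg hwmaxpos.le (Nat.cast_nonneg k)) hnpos.le]
  have hgoodU : good Finset.univ := by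
    constructor
    · exact_mod_cast (by push_cast; linarith : ((k+1 : ℕ):ℝ) ≤ ((Finset.univ : Finset V).card : ℝ))
    · have : d * (((Finset.univ : Finset V).card : ℝ) - c)
          < d * ((Finset.univ : Finset V).card : ℝ) := by nlinarith
      linarith
  obtain ⟨S, hSmem, hSmin⟩ := Finset.exists_min_image
    ((Finset.univ : Finset (Finset V)).filter good) Finset.card
    ⟨Finset.univ, Finset.mem_filter.2 ⟨Finset.mem_univ _, hgoodU⟩⟩
  have hSgood : good S := (Finset.mem_filter.1 hSmem).2
  have hnotgood : ∀ A : Finset V, A.card < S.card → ¬ good A := by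
    intro A hA hgA
    have := hSmin A (Finset.mem_filter.2 ⟨Finset.mem_univ _, hgA⟩)
    omega
  have hScard : k + 2 ≤ S.card := hgood_card S hSgood
  have hdeg : ∀ v ∈ S, d < wdeg G w S v := by
    intro v hv
    have h1 : ¬ good (S.erase v) := hnotgood _ (Finset.card_erase_lt_of_mem hv)
    have h2 : k + 1 ≤ (S.erase v).card := by
      rw [Finset.card_erase_of_mem hv]; omega
    have h3 : ¬ (d * (((S.erase v).card:ℝ) - c) < wsum G w (S.erase v)) :=
      fun hh => h1 ⟨h2, hh⟩
    push_neg at h3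
    have h4 := wsum_erase G w S v
    have h5 := hSgood.2
    have hc2 : ((S.erase v).card : ℝ) = (S.card:ℝ) - 1 := by
      rw [Finset.card_erase_of_mem hv]
      have h6 : 1 ≤ S.card := Finset.card_pos.2 ⟨v, hv⟩
      push_cast [h6]
      ring
    rw [hc2] at h3
    have hring : d * ((S.card:ℝ) - c) = d * ((S.card:ℝ) - 1 - c) + d := by ring
    linarith
  have hnbr : ∀ v ∈ S, k + 1 ≤ ((S.erase v).filter (fun u => G.Adj v u)).card := by
    intro v hv
    by_contra hlt
    push_neg at hlt
    have h4 : (((S.erase v).filter (fun u => G.Adj v u)).card : ℝ) ≤ (k:ℝ) := by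
      exact_mod_cast Nat.lt_succ_iff.1 hlt
    have h2 := hdeg v hv
    rw [wdeg_eq G w hv] at h2
    have h3 : ∑ u ∈ (S.erase v).filter (fun u => G.Adj v u), w s(v, u)
        ≤ (((S.erase v).filter (fun u => G.Adj v u)).card : ℝ) * wmax := by
      rw [← nsmul_eq_mul]
      apply Finset.sum_le_card_nsmul
      intro u hu
      exact hbmax _ ((G.mem_edgeSet).2 (Finset.mem_filter.1 hu).2)
    nlinarith
  refine ⟨S, ⟨?_, ?_⟩, ?_⟩
  · have : k / 2 ≤ k := Nat.div_le_self k 2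
    omega
  · -- connectivity
    intro D hDS hDcard
    by_contra hnc
    have hcardSD : (S \ D).card = S.card - D.card := Finset.card_sdiff_of_subset hDS
    have hDk : D.card ≤ k / 2 := Nat.lt_succ_iff.1 hDcard
    have hne : (S \ D).Nonempty := by
      rw [← Finset.card_pos, hcardSD]
      have : k / 2 ≤ k := Nat.div_le_self k 2
      have := Finset.card_le_card hDS
      omega
    obtain ⟨x₀, hx₀⟩ := hne
    set sSet : Set V := ((S \ D : Finset V) : Set V) with hsSetdef
    have hnonempty : Nonempty ↥sSet := ⟨⟨x₀, Finset.mem_coe.2 hx₀⟩⟩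
    rw [SimpleGraph.connected_iff] at hnc
    have hnp : ¬ (G.induce sSet).Preconnected := fun hp => hnc ⟨hp, hnonempty⟩
    obtain ⟨a, b, hab⟩ : ∃ a b : ↥sSet, ¬ (G.induce sSet).Reachable a b := by
      by_contra h
      push_neg at h
      exact hnp fun u v => h u v
    set X : Finset V := (S \ D).filter
      (fun x => ∃ hx : x ∈ sSet, (G.induce sSet).Reachable a ⟨x, hx⟩) with hXdef
    set Y : Finset V := (S \ D) \ X with hYdef
    have haSD : (a : V) ∈ S \ D := Finset.mem_coe.1 a.2
    have hbSD : (b : V) ∈ S \ D := Finset.mem_coe.1 b.2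
    have haX : (a : V) ∈ X := by
      refine Finset.mem_filter.2 ⟨haSD, a.2, ?_⟩
      exact SimpleGraph.Reachable.refl a
    have hbnX : (b : V) ∉ X := by
      intro hbX
      obtain ⟨hx, hr⟩ := (Finset.mem_filter.1 hbX).2
      have heq : (⟨(b : V), hx⟩ : ↥sSet) = b := Subtype.ext rfl
      rw [heq] at hr
      exact hab hr
    have hbY : (b : V) ∈ Y := Finset.mem_sdiff.2 ⟨hbSD, hbnX⟩
    have hnoedge : ∀ x ∈ X, ∀ y ∈ S \ D, y ∉ X → ¬ G.Adj x y := by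
      intro x hx y hy hyX hadj
      obtain ⟨hxs, hr⟩ := (Finset.mem_filter.1 hx).2
      have hys : y ∈ sSet := Finset.mem_coe.2 hy
      have hadj' : (G.induce sSet).Adj ⟨x, hxs⟩ ⟨y, hys⟩ := hadj
      exact hyX (Finset.mem_filter.2 ⟨hy, hys, hr.trans hadj'.reachable⟩)
    set A : Finset V := X ∪ D with hAdef
    set B : Finset V := Y ∪ D with hBdef
    have hXS : X ⊆ S \ D := Finset.filter_subset _ _
    have hYS : Y ⊆ S \ D := Finset.sdiff_subset
    have hAS : A ⊆ S := Finset.union_subset (hXS.trans Finset.sdiff_subset) hDS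
    have hBS : B ⊆ S := Finset.union_subset (hYS.trans Finset.sdiff_subset) hDS
    have hbA : (b : V) ∉ A := by
      rw [hAdef, Finset.mem_union]
      rintro (h | h)
      · exact hbnX h
      · exact (Finset.mem_sdiff.1 hbSD).2 h
    have haB : (a : V) ∉ B := by
      rw [hBdef, Finset.mem_union]
      rintro (h | h)
      · exact (Finset.mem_sdiff.1 h).2 haX
      · exact (Finset.mem_sdiff.1 haSD).2 h
    have hAcard : A.card < S.card :=
      Finset.card_lt_card ((Finset.ssubset_iff_of_subset hAS).2
        ⟨b, (Finset.mem_sdiff.1 hbSD).1, hbA⟩)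
    have hBcard : B.card < S.card :=
      Finset.card_lt_card ((Finset.ssubset_iff_of_subset hBS).2
        ⟨a, (Finset.mem_sdiff.1 haSD).1, haB⟩)
    have haS : (a : V) ∈ S := (Finset.mem_sdiff.1 haSD).1
    have hbS : (b : V) ∈ S := (Finset.mem_sdiff.1 hbSD).1
    have hAbig : k + 2 ≤ A.card := by
      have hsub : (S.erase (a : V)).filter (fun u => G.Adj (a : V) u) ⊆ A := by
        intro u hu
        obtain ⟨hu1, hadj⟩ := Finset.mem_filter.1 hu
        have huS : u ∈ S := Finset.mem_of_mem_erase hu1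
        by_cases hD : u ∈ D
        · exact Finset.mem_union_right _ hD
        · have huSD : u ∈ S \ D := Finset.mem_sdiff.2 ⟨huS, hD⟩
          by_cases hX : u ∈ X
          · exact Finset.mem_union_left _ hX
          · exact absurd hadj (hnoedge _ haX u huSD hX)
      have hanot : (a : V) ∉ (S.erase (a : V)).filter (fun u => G.Adj (a : V) u) := by
        simp
      have hins : insert (a : V) ((S.erase (a : V)).filter (fun u => G.Adj (a : V) u)) ⊆ A :=
        Finset.insert_subset (Finset.mem_union_left _ haX) hsub
      have := Finset.card_le_card hins
      rw [Finset.card_insert_of_notMem hanot] at this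
      have := hnbr _ haS
      omega
    have hBbig : k + 2 ≤ B.card := by
      have hsub : (S.erase (b : V)).filter (fun u => G.Adj (b : V) u) ⊆ B := by
        intro u hu
        obtain ⟨hu1, hadj⟩ := Finset.mem_filter.1 hu
        have huS : u ∈ S := Finset.mem_of_mem_erase hu1
        by_cases hD : u ∈ D
        · exact Finset.mem_union_right _ hD
        · have huSD : u ∈ S \ D := Finset.mem_sdiff.2 ⟨huS, hD⟩
          by_cases hX : u ∈ X
          · exact absurd hadj.symm (hnoedge u hX (b : V) hbSD hbnX)
          · exact Finset.mem_union_left _ (Finset.mem_sdiff.2 ⟨huSD, hX⟩)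
      have hanot : (b : V) ∉ (S.erase (b : V)).filter (fun u => G.Adj (b : V) u) := by
        simp
      have hins : insert (b : V) ((S.erase (b : V)).filter (fun u => G.Adj (b : V) u)) ⊆ B :=
        Finset.insert_subset (Finset.mem_union_left _ hbY) hsub
      have := Finset.card_le_card hins
      rw [Finset.card_insert_of_notMem hanot] at this
      have := hnbr _ hbS
      omega
    have hA3 : wsum G w A ≤ d * ((A.card:ℝ) - c) := by
      by_contra hh
      push_neg at hh
      exact hnotgood A hAcard ⟨by omega, hh⟩
    have hB3 : wsum G w B ≤ d * ((B.card:ℝ) - c) := by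
      by_contra hh
      push_neg at hh
      exact hnotgood B hBcard ⟨by omega, hh⟩
    have hsplitE : edgesIn G S ⊆ edgesIn G A ∪ edgesIn G B := by
      intro e he
      rw [mem_edgesIn] at he
      obtain ⟨heE, hein⟩ := he
      induction e using Sym2.ind with
      | _ p q =>
        have hp : p ∈ S := hein p (by simp)
        have hq : q ∈ S := hein q (by simp)
        have hadj : G.Adj p q := (G.mem_edgeSet).1 heE
        have hbuild : ∀ T : Finset V, p ∈ T → q ∈ T → s(p,q) ∈ edgesIn G T := by
          intro T h1 h2
          rw [mem_edgesIn]
          refine ⟨heE, fun v hv => ?_⟩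
          rcases Sym2.mem_iff.1 hv with rfl | rfl
          exacts [h1, h2]
        have hclass : ∀ z, z ∈ S → z ∈ X ∨ z ∈ Y ∨ z ∈ D := by
          intro z hz
          by_cases h1 : z ∈ D
          · exact Or.inr (Or.inr h1)
          · have hzSD : z ∈ S \ D := Finset.mem_sdiff.2 ⟨hz, h1⟩
            by_cases h2 : z ∈ X
            · exact Or.inl h2
            · exact Or.inr (Or.inl (Finset.mem_sdiff.2 ⟨hzSD, h2⟩))
        have hYnX : ∀ z, z ∈ Y → z ∉ X := fun z hz => (Finset.mem_sdiff.1 hz).2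
        rcases hclass p hp with hpc | hpc | hpc <;> rcases hclass q hq with hqc | hqc | hqc
        · exact Finset.mem_union_left _ (hbuild A (Finset.mem_union_left _ hpc)
            (Finset.mem_union_left _ hqc))
        · exact absurd hadj (hnoedge p hpc q (hYS hqc) (hYnX q hqc))
        · exact Finset.mem_union_left _ (hbuild A (Finset.mem_union_left _ hpc)
            (Finset.mem_union_right _ hqc))
        · exact absurd hadj.symm (hnoedge q hqc p (hYS hpc) (hYnX p hpc))
        · exact Finset.mem_union_right _ (hbuild B (Finset.mem_union_left _ hpc)
            (Finset.mem_union_left _ hqc))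
        · exact Finset.mem_union_right _ (hbuild B (Finset.mem_union_left _ hpc)
            (Finset.mem_union_right _ hqc))
        · exact Finset.mem_union_left _ (hbuild A (Finset.mem_union_right _ hpc)
            (Finset.mem_union_left _ hqc))
        · exact Finset.mem_union_right _ (hbuild B (Finset.mem_union_right _ hpc)
            (Finset.mem_union_left _ hqc))
        · exact Finset.mem_union_left _ (hbuild A (Finset.mem_union_right _ hpc)
            (Finset.mem_union_right _ hqc))
    have hw1 : wsum G w S ≤ wsum G w A + wsum G w B := by
      have h1 : wsum G w S ≤ ∑ e ∈ edgesIn G A ∪ edgesIn G B, w e := by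
        apply Finset.sum_le_sum_of_subset_of_nonneg hsplitE
        intro e he _
        rcases Finset.mem_union.1 he with h | h
        · exact hpos0 e (mem_edgesIn.1 h).1
        · exact hpos0 e (mem_edgesIn.1 h).1
      have h2 := Finset.sum_union_inter (s₁ := edgesIn G A) (s₂ := edgesIn G B) (f := w)
      have h3 : (0:ℝ) ≤ ∑ e ∈ edgesIn G A ∩ edgesIn G B, w e := by
        apply Finset.sum_nonneg
        intro e he
        exact hpos0 e (mem_edgesIn.1 (Finset.mem_inter.1 he).1).1
      simp only [wsum] at h1 ⊢
      linarith
    have hXDdisj : Disjoint X D :=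
      Finset.disjoint_of_subset_left hXS Finset.sdiff_disjoint
    have hYDdisj : Disjoint Y D :=
      Finset.disjoint_of_subset_left hYS Finset.sdiff_disjoint
    have hAeq : A.card = X.card + D.card := Finset.card_union_of_disjoint hXDdisj
    have hBeq : B.card = Y.card + D.card := Finset.card_union_of_disjoint hYDdisj
    have hYeq : Y.card = (S \ D).card - X.card := Finset.card_sdiff_of_subset hXS
    have hXle : X.card ≤ (S \ D).card := Finset.card_le_card hXS
    have hDle' : D.card ≤ S.card := Finset.card_le_card hDS
    have hABsum : A.card + B.card = S.card + D.card := by omega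
    have hsumAB : (A.card:ℝ) + (B.card:ℝ) = (S.card:ℝ) + (D.card:ℝ) := by
      exact_mod_cast congrArg (Nat.cast : ℕ → ℝ) hABsum
    have hfinal := hSgood.2
    have hring : d * ((A.card:ℝ) - c) + d * ((B.card:ℝ) - c)
        = d * (((A.card:ℝ) + (B.card:ℝ)) - 2*c) := by ring
    rw [hsumAB] at hring
    have h9 : d * ((S.card:ℝ) - c) < d * (((S.card:ℝ) + (D.card:ℝ)) - 2*c) := by
      linarith
    have h10 : (S.card:ℝ) - c < ((S.card:ℝ) + (D.card:ℝ)) - 2*c :=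
      lt_of_mul_lt_mul_left h9 hd.le
    have hDreal : (D.card:ℝ) ≤ ((k/2 : ℕ):ℝ) := by exact_mod_cast hDk
    rw [hcdef] at h10
    linarith
  · intro v hv
    have h1 := hdeg v hv
    have h2 : wmin * (k:ℝ) ≤ wmax * (k:ℝ) :=
      mul_le_mul_of_nonneg_right hminmax (Nat.cast_nonneg k)
    linarith
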